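/- Let (X_i)_{i≥1} be independent identically distributed random variables taking values in the positive integers, with finite mean μ := E[X₁] < ∞, and suppose the support of X₁ is aperiodic, i.e. the greatest common divisor of {k ∈ ℕ₊ : P(X₁ = k) > 0} equals 1. Let S_0 := 0 and S_k := X₁ + ⋯ + X_k. Then lim_{n→∞} Σ_{k=0}^∞ P( S_k = n ) = 1/μ. -/

import Mathlib

open MeasureTheory ProbabilityTheory Filter Topology



/-- Bezout for finsets of naturals: the gcd is an integer combination. -/
lemma finset_gcd_int_comb (F : Finset ℕ) :
    ∃ c : ℕ → ℤ, ((F.gcd (id : ℕ → ℕ) : ℕ) : ℤ) = ∑ i ∈ F, c i * i := by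
  classical
  induction F using Finset.induction_on with
  | empty => exact ⟨0, by simp⟩
  | @insert a F ha ih =>
    obtain ⟨c, hc⟩ := ih
    rw [Finset.gcd_insert]
    refine ⟨fun i => if i = a then Nat.gcdA a (F.gcd id) else Nat.gcdB a (F.gcd id) * c i, ?_⟩
    rw [Finset.sum_insert ha]
    dsimp only
    rw [if_pos rfl]
    have h := Nat.gcd_eq_gcd_ab a (F.gcd id)
    have h2 : ∑ i ∈ F, (if i = a then Nat.gcdA a (F.gcd id) else Nat.gcdB a (F.gcd id) * c i) * (i : ℤ)
        = Nat.gcdB a (F.gcd id) * ∑ i ∈ F, c i * i := by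
      rw [Finset.mul_sum]
      refine Finset.sum_congr rfl fun i hi => ?_
      rw [if_neg (by rintro rfl; exact ha hi)]
      ring
    rw [h2, ← hc]
    simp only [id]
    have hg : gcd a (F.gcd id) = Nat.gcd a (F.gcd id) := rfl
    rw [hg]
    push_cast [h]
    ring

/-- If every common divisor of a set of positive naturals is 1, then the additive
submonoid it generates contains all sufficiently large naturals. -/
lemma schur_numerical_semigroup (S : Set ℕ) (h0 : 0 ∉ S)
    (hgcd : ∀ m : ℕ, (∀ k ∈ S, m ∣ k) → m = 1) :
    ∃ N : ℕ, ∀ n, N ≤ n → n ∈ AddSubmonoid.closure S := by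
  classical
  have hSne : S.Nonempty := by
    by_contra h
    rw [Set.not_nonempty_iff_eq_empty] at h
    subst h
    have := hgcd 2 (by simp)
    omega
  obtain ⟨a, haS⟩ := hSne
  have hP : ∃ g, ∃ F : Finset ℕ, ↑F ⊆ S ∧ F.Nonempty ∧ F.gcd id = g :=
    ⟨Finset.gcd {a} id, {a}, by simpa using haS, ⟨a, by simp⟩, rfl⟩
  obtain ⟨F, hFS, hFne, hFg⟩ := Nat.find_spec hP
  set g := Nat.find hP with hgdef
  have hgpos : 0 < g := by
    rcases Nat.eq_zero_or_pos g with h | h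
    · exfalso
      rw [h] at hFg
      obtain ⟨x, hx⟩ := hFne
      have hx0 : x = 0 := by
        have := Finset.gcd_eq_zero_iff.mp hFg x hx
        simpa using this
      subst hx0
      exact h0 (hFS hx)
    · exact h
  have hdvd : ∀ s ∈ S, g ∣ s := by
    intro s hs
    have hsub : ((insert s F : Finset ℕ) : Set ℕ) ⊆ S := by
      intro x hx
      rcases Finset.mem_insert.mp (by exact_mod_cast hx) with rfl | hx'
      · exact hs
      · exact hFS (by exact_mod_cast hx')
    have hmem : ∃ F' : Finset ℕ, ↑F' ⊆ S ∧ F'.Nonempty ∧ F'.gcd id = (insert s F).gcd id :=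
      ⟨insert s F, hsub, ⟨s, Finset.mem_insert_self s F⟩, rfl⟩
    have hge : g ≤ (insert s F).gcd id := Nat.find_min' hP hmem
    have hdvd' : (insert s F).gcd id ∣ g := by
      rw [← hFg, Finset.gcd_insert]
      exact Nat.gcd_dvd_right _ _
    have hle := Nat.le_of_dvd hgpos hdvd'
    have heq : (insert s F).gcd id = g := le_antisymm hle hge
    have hds : (insert s F).gcd id ∣ s := by
      simpa using Finset.gcd_dvd (f := (id : ℕ → ℕ)) (Finset.mem_insert_self s F)
    rwa [heq] at hds
  have hg1 : g = 1 := hgcd g hdvd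
  rw [hg1] at hFg
  obtain ⟨c, hc⟩ := finset_gcd_int_comb F
  rw [hFg] at hc
  set D := AddSubmonoid.closure S with hD
  set p := ∑ i ∈ F, (c i).toNat * i with hp
  set q := ∑ i ∈ F, (-c i).toNat * i with hq
  have hmul : ∀ (m x : ℕ), x ∈ D → m * x ∈ D := fun m x hx => by
    simpa [smul_eq_mul] using nsmul_mem hx m
  have hpD : p ∈ D := by
    refine sum_mem (fun i hi => ?_)
    exact hmul _ _ (AddSubmonoid.subset_closure (hFS hi))
  have hqD : q ∈ D := by
    refine sum_mem (fun i hi => ?_)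
    exact hmul _ _ (AddSubmonoid.subset_closure (hFS hi))
  have hpq : (p : ℤ) - (q : ℤ) = 1 := by
    have hstep : (p : ℤ) - (q : ℤ) = ∑ i ∈ F, c i * i := by
      rw [hp, hq]
      push_cast
      rw [← Finset.sum_sub_distrib]
      refine Finset.sum_congr rfl fun i hi => ?_
      rw [← sub_mul]
      congr 1
      omega
    rw [hstep, ← hc]
    simp
  have hpq' : p = q + 1 := by omega
  refine ⟨q * q + 1, fun n hn => ?_⟩
  rcases Nat.eq_zero_or_pos q with hq0 | hq0
  · have h1 : (1 : ℕ) ∈ D := by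
      have := hpD
      rw [hpq', hq0] at this
      simpa using this
    simpa using hmul n 1 h1
  · set k := n / q with hk
    set rm := n % q with hrm
    have hrmq : rm < q := Nat.mod_lt _ hq0
    have hkq : q ≤ k := by
      rw [hk, Nat.le_div_iff_mul_le hq0]
      nlinarith
    have hkr : rm ≤ k := le_trans (le_of_lt hrmq) hkq
    have hn' : n = rm * p + (k - rm) * q := by
      have h1 : n = q * k + rm := (Nat.div_add_mod n q).symm
      rw [hpq']
      have h4 : k - rm + rm = k := Nat.sub_add_cancel hkr
      nlinarith [h4, h1]
    rw [hn']
    exact AddSubmonoid.add_mem _ (hmul _ _ hpD) (hmul _ _ hqD)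



section EFP

/-- A limit along a subsequence is at most the limsup. -/
lemma subseq_le_limsup {u : ℕ → ℝ} (hub : ∀ n, u n ≤ 1) (hunn : ∀ n, 0 ≤ u n)
    {ψ : ℕ → ℕ} (hψ : Tendsto ψ atTop atTop) {a : ℝ}
    (ha : Tendsto (fun j => u (ψ j)) atTop (𝓝 a)) :
    a ≤ limsup u atTop := by
  by_contra hlt
  push_neg at hlt
  have hb : IsBoundedUnder (· ≤ ·) atTop u := isBoundedUnder_of ⟨1, hub⟩
  set c := (limsup u atTop + a) / 2 with hc
  have h1 : limsup u atTop < c := by rw [hc]; linarith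
  have h2 : c < a := by rw [hc]; linarith
  have hev : ∀ᶠ n in atTop, u n < c := eventually_lt_of_limsup_lt h1 hb
  have hev2 : ∀ᶠ j in atTop, u (ψ j) < c := hψ.eventually hev
  have hev3 : ∀ᶠ j in atTop, c < u (ψ j) := ha.eventually (eventually_gt_nhds h2)
  obtain ⟨j, h4, h5⟩ := (hev2.and hev3).exists
  linarith

/-- A limit along a subsequence is at least the liminf. -/
lemma liminf_le_subseq {u : ℕ → ℝ} (hub : ∀ n, u n ≤ 1) (hunn : ∀ n, 0 ≤ u n)
    {ψ : ℕ → ℕ} (hψ : Tendsto ψ atTop atTop) {a : ℝ}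
    (ha : Tendsto (fun j => u (ψ j)) atTop (𝓝 a)) :
    liminf u atTop ≤ a := by
  by_contra hlt
  push_neg at hlt
  have hb : IsBoundedUnder (· ≥ ·) atTop u := isBoundedUnder_of ⟨0, hunn⟩
  set c := (liminf u atTop + a) / 2 with hc
  have h1 : c < liminf u atTop := by rw [hc]; linarith
  have h2 : a < c := by rw [hc]; linarith
  have hev : ∀ᶠ n in atTop, c < u n := eventually_lt_of_lt_liminf h1 hb
  have hev2 : ∀ᶠ j in atTop, c < u (ψ j) := hψ.eventually hev
  have hev3 : ∀ᶠ j in atTop, u (ψ j) < c := ha.eventually (eventually_lt_nhds h2)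
  obtain ⟨j, h4, h5⟩ := (hev2.and hev3).exists
  linarith

lemma exists_subseq_tendsto_limsup {u : ℕ → ℝ} (hub : ∀ n, u n ≤ 1) (hunn : ∀ n, 0 ≤ u n) :
    ∃ φ : ℕ → ℕ, StrictMono φ ∧ Tendsto (fun j => u (φ j)) atTop (𝓝 (limsup u atTop)) := by
  set L := limsup u atTop with hL
  have hb : IsBoundedUnder (· ≤ ·) atTop u := isBoundedUnder_of ⟨1, hub⟩
  have hb' : IsBoundedUnder (· ≥ ·) atTop u := isBoundedUnder_of ⟨0, hunn⟩
  have hfr : ∀ n : ℕ, ∃ᶠ k in atTop, |u k - L| < 1 / (n + 1) := by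
    intro n
    have hε : (0:ℝ) < 1 / (n + 1) := by positivity
    have hev : ∀ᶠ k in atTop, u k < L + 1 / (n + 1) :=
      eventually_lt_of_limsup_lt (by linarith) hb
    have hfr2 : ∃ᶠ k in atTop, L - 1 / (n + 1) < u k :=
      frequently_lt_of_lt_limsup hb'.isCoboundedUnder_le (by linarith)
    refine (hfr2.and_eventually hev).mono fun k ⟨h1, h2⟩ => ?_
    rw [abs_lt]; constructor <;> linarith
  obtain ⟨φ, hφ, hφ2⟩ := extraction_forall_of_frequently hfr
  refine ⟨φ, hφ, ?_⟩
  rw [tendsto_iff_dist_tendsto_zero]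
  simp only [Real.dist_eq]
  refine squeeze_zero (fun n => abs_nonneg _) (fun n => (hφ2 n).le) ?_
  exact tendsto_one_div_add_atTop_nhds_zero_nat

lemma exists_subseq_tendsto_liminf {u : ℕ → ℝ} (hub : ∀ n, u n ≤ 1) (hunn : ∀ n, 0 ≤ u n) :
    ∃ φ : ℕ → ℕ, StrictMono φ ∧ Tendsto (fun j => u (φ j)) atTop (𝓝 (liminf u atTop)) := by
  set L := liminf u atTop with hL
  have hb : IsBoundedUnder (· ≤ ·) atTop u := isBoundedUnder_of ⟨1, hub⟩
  have hb' : IsBoundedUnder (· ≥ ·) atTop u := isBoundedUnder_of ⟨0, hunn⟩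
  have hfr : ∀ n : ℕ, ∃ᶠ k in atTop, |u k - L| < 1 / (n + 1) := by
    intro n
    have hε : (0:ℝ) < 1 / (n + 1) := by positivity
    have hev : ∀ᶠ k in atTop, L - 1 / (n + 1) < u k :=
      eventually_lt_of_lt_liminf (by linarith) hb'
    have hfr2 : ∃ᶠ k in atTop, u k < L + 1 / (n + 1) :=
      frequently_lt_of_liminf_lt hb.isCoboundedUnder_ge (by linarith)
    refine (hfr2.and_eventually hev).mono fun k ⟨h1, h2⟩ => ?_
    rw [abs_lt]; constructor <;> linarith
  obtain ⟨φ, hφ, hφ2⟩ := extraction_forall_of_frequently hfr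
  refine ⟨φ, hφ, ?_⟩
  rw [tendsto_iff_dist_tendsto_zero]
  simp only [Real.dist_eq]
  refine squeeze_zero (fun n => abs_nonneg _) (fun n => (hφ2 n).le) ?_
  exact tendsto_one_div_add_atTop_nhds_zero_nat

/-- Extraction of simultaneous limits of all backward shifts, via compactness of `[0,1]^ℕ`. -/
lemma exists_shift_limits {u : ℕ → ℝ} (hunn : ∀ n, 0 ≤ u n) (hub : ∀ n, u n ≤ 1)
    {ψ : ℕ → ℕ} (hψ : StrictMono ψ) {c : ℝ} (hc : Tendsto (fun j => u (ψ j)) atTop (𝓝 c)) :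
    ∃ φ : ℕ → ℕ, StrictMono φ ∧ ∃ w : ℕ → ℝ, w 0 = c ∧
      ∀ t, Tendsto (fun j => u (φ j - t)) atTop (𝓝 (w t)) := by
  set K : Set (ℕ → ℝ) := Set.pi Set.univ (fun _ => Set.Icc (0:ℝ) 1) with hK
  have hKc : IsCompact K := isCompact_univ_pi (fun _ => isCompact_Icc)
  set V : ℕ → (ℕ → ℝ) := fun j t => u (ψ j - t) with hV
  have hmem : ∀ j, V j ∈ K := fun j => by
    intro t _
    exact ⟨hunn _, hub _⟩
  obtain ⟨w, hwK, ρ, hρ, hconv⟩ := hKc.tendsto_subseq hmem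
  refine ⟨ψ ∘ ρ, hψ.comp hρ, w, ?_, ?_⟩
  · have h1 : Tendsto (fun j => u (ψ (ρ j))) atTop (𝓝 c) :=
      hc.comp hρ.tendsto_atTop
    have h2 : Tendsto (fun j => V (ρ j) 0) atTop (𝓝 (w 0)) :=
      (tendsto_pi_nhds.mp hconv) 0
    have h3 : (fun j => V (ρ j) 0) = fun j => u (ψ (ρ j)) := by
      funext j; simp [hV]
    rw [h3] at h2
    exact tendsto_nhds_unique h2 h1
  · intro t
    exact (tendsto_pi_nhds.mp hconv) t

end EFP


/-- If `w ≤ c` pointwise, `w 0 = c`, and `w` satisfies the harmonicity relation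
`w t = ∑' m, f m * w (t + m)` w.r.t. an aperiodic probability sequence `f`, then
`w` is eventually equal to `c`. -/
lemma force_all (f : ℕ → ℝ) (hfnn : ∀ n, 0 ≤ f n) (hf0 : f 0 = 0) (hfsum : HasSum f 1)
    (hgcd : ∀ m : ℕ, (∀ k, f k ≠ 0 → m ∣ k) → m = 1)
    (w : ℕ → ℝ) (c : ℝ) (hw0 : w 0 = c) (hwle : ∀ t, w t ≤ c)
    (hident : ∀ t, w t = ∑' m, f m * w (t + m))
    (hsummable : ∀ t, Summable (fun m => f m * w (t + m))) :
    ∃ N, ∀ t, N ≤ t → w t = c := by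
  have hforce : ∀ t, w t = c → ∀ m, f m ≠ 0 → w (t + m) = c := by
    intro t ht m hm
    have hs2 : HasSum (fun m => f m * c) c := by simpa using hfsum.mul_right c
    have hg : ∀ k, 0 ≤ f k * c - f k * w (t + k) := by
      intro k
      have := hwle (t + k)
      nlinarith [hfnn k]
    have hsg : Summable (fun k => f k * c - f k * w (t + k)) :=
      hs2.summable.sub (hsummable t)
    have htsum : ∑' k, (f k * c - f k * w (t + k)) = 0 := by
      rw [Summable.tsum_sub hs2.summable (hsummable t), hs2.tsum_eq, ← (hident t), ht]
      ring
    have hle : f m * c - f m * w (t + m) ≤ 0 := by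
      calc f m * c - f m * w (t + m) ≤ ∑' k, (f k * c - f k * w (t + k)) :=
            Summable.le_tsum hsg m (fun j _ => hg j)
        _ = 0 := htsum
    have heq : f m * c - f m * w (t + m) = 0 := le_antisymm hle (hg m)
    have : f m * (c - w (t + m)) = 0 := by ring_nf; ring_nf at heq; linarith
    rcases mul_eq_zero.mp this with h | h
    · exact absurd h hm
    · linarith
  -- propagate along the additive closure of the support
  set S : Set ℕ := {k | f k ≠ 0} with hS
  have hprop : ∀ x ∈ AddSubmonoid.closure S, ∀ t, w t = c → w (t + x) = c := by
    intro x hx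
    induction hx using AddSubmonoid.closure_induction with
    | mem y hy => exact fun t ht => hforce t ht y hy
    | zero => intro t ht; simpa using ht
    | add y z hy hz ihy ihz =>
        intro t ht
        have := ihz (t + y) (ihy t ht)
        rwa [add_assoc] at this
  obtain ⟨N, hN⟩ := schur_numerical_semigroup S (by simp [hS, hf0]) (by
    intro m hm
    exact hgcd m (fun k hk => hm k hk))
  refine ⟨N, fun t ht => ?_⟩
  have := hprop t (hN t ht) 0 (by simpa using hw0)
  simpa using this


theorem efp_renewal (f u r : ℕ → ℝ)
    (hfnn : ∀ n, 0 ≤ f n) (hf0 : f 0 = 0) (hfsum : HasSum f 1)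
    (hr : ∀ t, HasSum (fun j => f (t + 1 + j)) (r t))
    (μ : ℝ) (hrsum : HasSum r μ)
    (hu0 : u 0 = 1) (hunn : ∀ n, 0 ≤ u n) (hub : ∀ n, u n ≤ 1)
    (hrec : ∀ n, u (n + 1) = ∑ m ∈ Finset.range (n + 2), f m * u (n + 1 - m))
    (hgcd : ∀ m : ℕ, (∀ k, f k ≠ 0 → m ∣ k) → m = 1) :
    Tendsto u atTop (𝓝 (1 / μ)) := by
  classical
  have hfsummable : Summable f := hfsum.summable
  have hrnn : ∀ t, 0 ≤ r t := fun t =>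
    hasSum_le (fun j => hfnn _) hasSum_zero (hr t)
  -- r 0 = 1
  have hr0 : r 0 = 1 := by
    have h1 : HasSum (fun n => f (n + 1)) (1 - ∑ i ∈ Finset.range 1, f i) :=
      (hasSum_nat_add_iff' 1).mpr hfsum
    simp only [Finset.range_one, Finset.sum_singleton, hf0, sub_zero] at h1
    have h2 : (fun j => f (0 + 1 + j)) = fun n => f (n + 1) := by
      funext j; congr 1; omega
    exact ((h2 ▸ hr 0).unique h1)
  -- r (t+1) = r t - f (t+1)
  have hrr : ∀ t, r (t + 1) = r t - f (t + 1) := by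
    intro t
    have h1 : HasSum (fun n => f (t + 1 + (n + 1))) (r t - ∑ i ∈ Finset.range 1, f (t + 1 + i)) :=
      (hasSum_nat_add_iff' (f := fun j => f (t + 1 + j)) 1).mpr (hr t)
    simp only [Finset.range_one, Finset.sum_singleton, Nat.add_zero] at h1
    have h2 : (fun n => f (t + 1 + (n + 1))) = fun n => f (t + 1 + 1 + n) := by
      funext n; congr 1; omega
    rw [h2] at h1
    exact (hr (t + 1)).unique h1
  -- partial sums of r are bounded by μ
  have hpartial : ∀ M : ℕ, ∑ t ∈ Finset.range M, r t ≤ μ := fun M =>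
    sum_le_hasSum _ (fun t _ => hrnn t) hrsum
  have hμ1 : (1:ℝ) ≤ μ := by
    have := hpartial 1
    simpa [hr0] using this
  have hμpos : (0:ℝ) < μ := by linarith
  -- the tail identity
  have htail : ∀ n, ∑ t ∈ Finset.range (n + 1), r t * u (n - t) = 1 := by
    intro n
    induction n with
    | zero => simp [hr0, hu0]
    | succ n ih =>
      have hsplit := Finset.sum_range_succ' (fun t => r t * u (n + 1 - t)) (n + 1)
      rw [hsplit]
      have h1 : ∀ t, n + 1 - (t + 1) = n - t := fun t => by omega
      have h2 : ∑ t ∈ Finset.range (n + 1), r (t + 1) * u (n + 1 - (t + 1))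
          = (∑ t ∈ Finset.range (n + 1), r t * u (n - t))
            - ∑ t ∈ Finset.range (n + 1), f (t + 1) * u (n - t) := by
        rw [← Finset.sum_sub_distrib]
        refine Finset.sum_congr rfl fun t _ => ?_
        rw [h1 t, hrr t]
        ring
      have h3 : u (n + 1) = ∑ t ∈ Finset.range (n + 1), f (t + 1) * u (n - t) := by
        rw [hrec n, Finset.sum_range_succ' (fun m => f m * u (n + 1 - m)) (n + 1)]
        simp only [hf0, zero_mul, add_zero]
        refine Finset.sum_congr rfl fun t _ => by rw [h1 t]
      rw [h2, ih]
      simp only [Nat.sub_self, hu0, hr0]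
      rw [← h3]
      simp only [Nat.sub_zero]
      ring
  -- the tsum form of the recursion
  set G : ℕ → ℕ → ℝ := fun n m => if 1 ≤ m ∧ m ≤ n then f m * u (n - m) else 0 with hG
  have hutsum : ∀ n, 1 ≤ n → u n = ∑' m, G n m := by
    intro n hn
    obtain ⟨k, rfl⟩ : ∃ k, n = k + 1 := ⟨n - 1, by omega⟩
    have hsupp : ∀ m ∉ Finset.range (k + 2), G (k + 1) m = 0 := by
      intro m hm
      rw [Finset.mem_range, not_lt] at hm
      simp only [hG]
      rw [if_neg]; omega
    rw [tsum_eq_sum hsupp, hrec k]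
    refine Finset.sum_congr rfl fun m hm => ?_
    rw [Finset.mem_range] at hm
    simp only [hG]
    rcases Nat.eq_zero_or_pos m with rfl | hm1
    · rw [if_neg (by omega), hf0, zero_mul]
    · rw [if_pos ⟨hm1, by omega⟩]
  have hGbound : ∀ n m, ‖G n m‖ ≤ f m := by
    intro n m
    simp only [hG]
    split_ifs with h
    · rw [Real.norm_eq_abs, abs_mul, abs_of_nonneg (hfnn m), abs_of_nonneg (hunn _)]
      nlinarith [hub (n - m), hfnn m, hunn (n - m)]
    · simpa using hfnn m
  -- main limit identity machinery
  have hident_gen : ∀ (φ : ℕ → ℕ), StrictMono φ → ∀ (w : ℕ → ℝ),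
      (∀ t, Tendsto (fun j => u (φ j - t)) atTop (𝓝 (w t))) →
      ∀ t, w t = ∑' m, f m * w (t + m) := by
    intro φ hφ w hw t
    have hφat : Tendsto φ atTop atTop := hφ.tendsto_atTop
    have hptwise : ∀ m, Tendsto (fun j => G (φ j - t) m) atTop (𝓝 (f m * w (t + m))) := by
      intro m
      rcases Nat.eq_zero_or_pos m with rfl | hm1
      · have : (fun j => G (φ j - t) 0) = fun _ => 0 := by
          funext j; simp only [hG]; rw [if_neg (by omega)]
        rw [this, hf0, zero_mul]
        exact tendsto_const_nhds
      · have hev : ∀ᶠ j in atTop, G (φ j - t) m = f m * u (φ j - (t + m)) := by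
          filter_upwards [hφat.eventually_ge_atTop (t + m)] with j hj
          simp only [hG]
          rw [if_pos ⟨hm1, by omega⟩, Nat.sub_sub]
        have h2 : Tendsto (fun j => f m * u (φ j - (t + m))) atTop (𝓝 (f m * w (t + m))) :=
          (hw (t + m)).const_mul (f m)
        exact h2.congr' (hev.mono fun j hj => hj.symm)
    have hconv : Tendsto (fun j => ∑' m, G (φ j - t) m) atTop (𝓝 (∑' m, f m * w (t + m))) :=
      tendsto_tsum_of_dominated_convergence hfsummable hptwise
        (Eventually.of_forall fun j => fun m => hGbound _ m)
    have hev2 : ∀ᶠ j in atTop, u (φ j - t) = ∑' m, G (φ j - t) m := by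
      filter_upwards [hφat.eventually_ge_atTop (t + 1)] with j hj
      exact hutsum _ (by omega)
    exact tendsto_nhds_unique ((hw t).congr' hev2) hconv
  have hsummable_gen : ∀ (w : ℕ → ℝ), (∀ s, 0 ≤ w s) → (∀ s, w s ≤ 1) →
      ∀ t, Summable (fun m => f m * w (t + m)) := by
    intro w h0 h1 t
    refine Summable.of_nonneg_of_le (fun m => mul_nonneg (hfnn m) (h0 _))
      (fun m => ?_) hfsummable
    nlinarith [hfnn m, h0 (t + m), h1 (t + m)]
  set L := limsup u atTop with hLdef
  set l := liminf u atTop with hldef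
  have hbddle : IsBoundedUnder (· ≤ ·) atTop u := isBoundedUnder_of ⟨1, hub⟩
  have hbddge : IsBoundedUnder (· ≥ ·) atTop u := isBoundedUnder_of ⟨0, hunn⟩
  have hlL : l ≤ L := liminf_le_limsup hbddle hbddge
  -- limsup part : L * μ ≤ 1
  have hLμ : L * μ ≤ 1 := by
    obtain ⟨ψ, hψmono, hψlim⟩ := exists_subseq_tendsto_limsup hub hunn
    obtain ⟨φ, hφmono, w, hw0, hwlim⟩ := exists_shift_limits hunn hub hψmono hψlim
    have hφat : Tendsto φ atTop atTop := hφmono.tendsto_atTop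
    have hshift : ∀ t, Tendsto (fun j => φ j - t) atTop atTop :=
      fun t => (tendsto_sub_atTop_nat t).comp hφat
    have hwle : ∀ t, w t ≤ L := fun t => subseq_le_limsup hub hunn (hshift t) (hwlim t)
    have hwnn : ∀ t, 0 ≤ w t := fun t =>
      ge_of_tendsto (hwlim t) (Eventually.of_forall fun j => hunn _)
    have hwub : ∀ t, w t ≤ 1 := fun t =>
      le_of_tendsto (hwlim t) (Eventually.of_forall fun j => hub _)
    obtain ⟨N, hN⟩ := force_all f hfnn hf0 hfsum hgcd w L hw0 hwle
      (hident_gen φ hφmono w hwlim) (hsummable_gen w hwnn hwub)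
    -- for every M, (∑_{t ≤ M} r t) * L ≤ 1
    have hpartialL : ∀ M : ℕ, (∑ t ∈ Finset.range (M + 1), r t) * L ≤ 1 := by
      intro M
      have hlim : Tendsto (fun j => ∑ t ∈ Finset.range (M + 1), r t * u (φ j - (N + t)))
          atTop (𝓝 (∑ t ∈ Finset.range (M + 1), r t * L)) := by
        refine tendsto_finset_sum _ fun t _ => ?_
        have := (hwlim (N + t)).const_mul (r t)
        rwa [hN (N + t) (by omega)] at this
      have hle : ∀ᶠ j in atTop, ∑ t ∈ Finset.range (M + 1), r t * u (φ j - (N + t)) ≤ 1 := by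
        filter_upwards [hφat.eventually_ge_atTop (N + M)] with j hj
        have hMle : Finset.range (M + 1) ⊆ Finset.range ((φ j - N) + 1) := by
          apply Finset.range_subset_range.mpr; omega
        calc ∑ t ∈ Finset.range (M + 1), r t * u (φ j - (N + t))
            = ∑ t ∈ Finset.range (M + 1), r t * u ((φ j - N) - t) := by
              refine Finset.sum_congr rfl fun t _ => ?_
              congr 2; omega
          _ ≤ ∑ t ∈ Finset.range ((φ j - N) + 1), r t * u ((φ j - N) - t) :=
              Finset.sum_le_sum_of_subset_of_nonneg hMle
                (fun t _ _ => mul_nonneg (hrnn t) (hunn _))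
          _ = 1 := htail (φ j - N)
      have := le_of_tendsto hlim hle
      calc (∑ t ∈ Finset.range (M + 1), r t) * L = ∑ t ∈ Finset.range (M + 1), r t * L := by
            rw [Finset.sum_mul]
        _ ≤ 1 := this
    -- pass to the limit in M
    have hlimM : Tendsto (fun M : ℕ => (∑ t ∈ Finset.range (M + 1), r t) * L)
        atTop (𝓝 (μ * L)) := by
      have h1 : Tendsto (fun M : ℕ => ∑ t ∈ Finset.range (M + 1), r t) atTop (𝓝 μ) :=
        (hrsum.tendsto_sum_nat).comp (tendsto_add_atTop_nat 1)
      exact h1.mul_const L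
    have := le_of_tendsto hlimM (Eventually.of_forall hpartialL)
    linarith [this]
  -- liminf part : 1 ≤ l * μ
  have hlμ : 1 ≤ l * μ := by
    obtain ⟨ψ, hψmono, hψlim⟩ := exists_subseq_tendsto_liminf hub hunn
    obtain ⟨φ, hφmono, w, hw0, hwlim⟩ := exists_shift_limits hunn hub hψmono hψlim
    have hφat : Tendsto φ atTop atTop := hφmono.tendsto_atTop
    have hshift : ∀ t, Tendsto (fun j => φ j - t) atTop atTop :=
      fun t => (tendsto_sub_atTop_nat t).comp hφat
    have hwge : ∀ t, l ≤ w t := fun t => liminf_le_subseq hub hunn (hshift t) (hwlim t)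
    have hwnn : ∀ t, 0 ≤ w t := fun t =>
      ge_of_tendsto (hwlim t) (Eventually.of_forall fun j => hunn _)
    have hwub : ∀ t, w t ≤ 1 := fun t =>
      le_of_tendsto (hwlim t) (Eventually.of_forall fun j => hub _)
    -- apply force_all to -w
    have hident := hident_gen φ hφmono w hwlim
    have hnegident : ∀ t, (-w) t = ∑' m, f m * (-w) (t + m) := by
      intro t
      have h1 := hident t
      have h2 : (fun m => f m * (-w) (t + m)) = fun m => -(f m * w (t + m)) := by
        funext m; simp only [Pi.neg_apply, mul_neg]
      rw [h2, tsum_neg, ← h1]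
      simp
    have hnegsummable : ∀ t, Summable (fun m => f m * (-w) (t + m)) := by
      intro t
      have h2 : (fun m => f m * (-w) (t + m)) = fun m => -(f m * w (t + m)) := by
        funext m; simp only [Pi.neg_apply, mul_neg]
      rw [h2]
      exact (hsummable_gen w hwnn hwub t).neg
    obtain ⟨N, hN⟩ := force_all f hfnn hf0 hfsum hgcd (-w) (-l)
      (by simp [hw0, hldef]) (fun t => by simpa using hwge t) hnegident hnegsummable
    have hNw : ∀ t, N ≤ t → w t = l := by
      intro t ht
      have := hN t ht
      simp only [Pi.neg_apply, neg_eq_iff_eq_neg] at this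
      linarith [this]
    -- for every M, 1 ≤ (∑_{t ≤ M} r t) * l + (μ - ∑_{t ≤ M} r t)
    have hpartiall : ∀ M : ℕ,
        1 ≤ (∑ t ∈ Finset.range (M + 1), r t) * l + (μ - ∑ t ∈ Finset.range (M + 1), r t) := by
      intro M
      have hlim : Tendsto (fun j => ∑ t ∈ Finset.range (M + 1), r t * u (φ j - (N + t)))
          atTop (𝓝 (∑ t ∈ Finset.range (M + 1), r t * l)) := by
        refine tendsto_finset_sum _ fun t _ => ?_
        have := (hwlim (N + t)).const_mul (r t)
        rwa [hNw (N + t) (by omega)] at this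
      have hge : ∀ᶠ j in atTop,
          1 - (μ - ∑ t ∈ Finset.range (M + 1), r t)
            ≤ ∑ t ∈ Finset.range (M + 1), r t * u (φ j - (N + t)) := by
        filter_upwards [hφat.eventually_ge_atTop (N + M)] with j hj
        set n := φ j - N with hn
        have hMle : Finset.range (M + 1) ⊆ Finset.range (n + 1) := by
          apply Finset.range_subset_range.mpr; omega
        have heq : ∑ t ∈ Finset.range (M + 1), r t * u (φ j - (N + t))
            = ∑ t ∈ Finset.range (M + 1), r t * u (n - t) := by
          refine Finset.sum_congr rfl fun t _ => ?_
          congr 2; omega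
        rw [heq]
        have hsplit : ∑ t ∈ Finset.range (n + 1), r t * u (n - t)
            = ∑ t ∈ Finset.range (M + 1), r t * u (n - t)
              + ∑ t ∈ Finset.range (n + 1) \ Finset.range (M + 1), r t * u (n - t) :=
          by rw [← Finset.sum_sdiff hMle]; ring
        have h1 : ∑ t ∈ Finset.range (n + 1) \ Finset.range (M + 1), r t * u (n - t)
            ≤ ∑ t ∈ Finset.range (n + 1) \ Finset.range (M + 1), r t := by
          refine Finset.sum_le_sum fun t _ => ?_
          nlinarith [hrnn t, hunn (n - t), hub (n - t)]
        have h2 : ∑ t ∈ Finset.range (n + 1) \ Finset.range (M + 1), r t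
            = ∑ t ∈ Finset.range (n + 1), r t - ∑ t ∈ Finset.range (M + 1), r t := by
          rw [Finset.sum_sdiff_eq_sub hMle]
        have h3 : ∑ t ∈ Finset.range (n + 1), r t ≤ μ := hpartial (n + 1)
        have h4 := htail n
        linarith
      have := ge_of_tendsto hlim hge
      have heq : ∑ t ∈ Finset.range (M + 1), r t * l = (∑ t ∈ Finset.range (M + 1), r t) * l := by
        rw [Finset.sum_mul]
      linarith [this, heq ▸ this]
    have hlimM : Tendsto (fun M : ℕ =>
        (∑ t ∈ Finset.range (M + 1), r t) * l + (μ - ∑ t ∈ Finset.range (M + 1), r t))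
        atTop (𝓝 (μ * l + (μ - μ))) := by
      have h1 : Tendsto (fun M : ℕ => ∑ t ∈ Finset.range (M + 1), r t) atTop (𝓝 μ) :=
        (hrsum.tendsto_sum_nat).comp (tendsto_add_atTop_nat 1)
      exact (h1.mul_const l).add (tendsto_const_nhds.sub h1)
    have := ge_of_tendsto hlimM (Eventually.of_forall hpartiall)
    nlinarith [this]
  -- conclusion
  have hLle : L ≤ 1 / μ := by
    rw [le_div_iff₀ hμpos]; linarith
  have hlge : 1 / μ ≤ l := by
    rw [div_le_iff₀ hμpos]; linarith
  have hL : L = 1 / μ := le_antisymm hLle (le_trans hlge hlL)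
  have hl : l = 1 / μ := le_antisymm (hL ▸ hlL) hlge
  exact tendsto_of_liminf_eq_limsup hl hL hbddle hbddge


theorem stmt17 {Ω : Type*} [MeasurableSpace Ω] (P : Measure Ω) [IsProbabilityMeasure P]
    (X : ℕ → Ω → ℕ) (hmeas : ∀ i, Measurable (X i))
    (hpos : ∀ i, ∀ᵐ ω ∂P, 1 ≤ X i ω)
    (hindep : iIndepFun X P)
    (hident : ∀ i, Measure.map (X i) P = Measure.map (X 0) P)
    (hint : Integrable (fun ω => (X 0 ω : ℝ)) P)
    (μ : ℝ) (hμ : μ = ∫ ω, (X 0 ω : ℝ) ∂P)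
    -- aperiodicity: the only common divisor of the support of `X₁` is `1`
    (haper : ∀ m : ℕ, (∀ k : ℕ, P {ω | X 0 ω = k} ≠ 0 → m ∣ k) → m = 1) :
    Tendsto (fun n : ℕ =>
        ∑' k : ℕ, (P {ω | ∑ i ∈ Finset.range k, X i ω = n}).toReal)
      atTop (nhds (1 / μ)) := by
  classical
  have hae : ∀ᵐ ω ∂P, ∀ i, 1 ≤ X i ω := (ae_all_iff).mpr hpos
  have hnull : P {ω | ¬ ∀ i, 1 ≤ X i ω} = 0 := ae_iff.mp hae
  set f' : ℕ → ENNReal := fun m => P {ω | X 0 ω = m} with hf'def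
  set f : ℕ → ℝ := fun m => (f' m).toReal with hfdef
  set v : ℕ → ℕ → ENNReal := fun k n => P {ω | ∑ i ∈ Finset.range k, X i ω = n} with hvdef
  set u : ℕ → ℝ := fun n => ∑ k ∈ Finset.range (n + 1), (v k n).toReal with hudef
  have hfin : ∀ s : Set Ω, P s ≠ ⊤ := fun s => measure_ne_top P s
  have hSmeas : ∀ k, Measurable fun ω => ∑ i ∈ Finset.range k, X i ω := by
    intro k
    exact Finset.measurable_sum _ (fun i _ => hmeas i)
  -- v k n = 0 for n < k
  have hv_zero : ∀ k n, n < k → v k n = 0 := by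
    intro k n hnk
    refine measure_mono_null ?_ hnull
    intro ω hω
    simp only [Set.mem_setOf_eq] at hω ⊢
    intro hall
    have hk : (k : ℕ) ≤ ∑ i ∈ Finset.range k, X i ω := by
      calc (k:ℕ) = ∑ _i ∈ Finset.range k, 1 := by simp
        _ ≤ ∑ i ∈ Finset.range k, X i ω := Finset.sum_le_sum (fun i _ => hall i)
    omega
  -- the target function equals u
  have hfun : (fun n : ℕ => ∑' k : ℕ, (P {ω | ∑ i ∈ Finset.range k, X i ω = n}).toReal)
      = u := by
    funext n
    refine tsum_eq_sum ?_
    intro k hk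
    rw [Finset.mem_range, not_lt] at hk
    have : v k n = 0 := hv_zero k n (by omega)
    simp only [hvdef] at this
    rw [this]
    simp
  rw [hfun]
  -- basic facts about f
  have hf0 : f 0 = 0 := by
    have h0 : f' 0 = 0 := by
      refine measure_mono_null ?_ (ae_iff.mp (hpos 0))
      intro ω hω
      simp only [Set.mem_setOf_eq] at hω ⊢
      omega
    simp [hfdef, h0]
  have hfnn : ∀ n, 0 ≤ f n := fun n => ENNReal.toReal_nonneg
  have hXpre : ∀ (i : ℕ) (m : ℕ), {ω | X i ω = m} = (X i) ⁻¹' {m} := by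
    intro i m; rfl
  have hf'map : ∀ (i : ℕ) (m : ℕ), P ((X i) ⁻¹' {m}) = f' m := by
    intro i m
    have h1 : P ((X i) ⁻¹' {m}) = (Measure.map (X i) P) {m} :=
      (Measure.map_apply (hmeas i) (measurableSet_singleton m)).symm
    rw [h1, hident i, Measure.map_apply (hmeas 0) (measurableSet_singleton m)]
    rfl
  have hdisj : ∀ t : ℕ, Pairwise (Function.onFun Disjoint fun j => {ω | X 0 ω = t + j}) := by
    intro t i j hij
    simp only [Function.onFun, Set.disjoint_left]
    intro ω h1 h2
    simp only [Set.mem_setOf_eq] at h1 h2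
    omega
  have hmeasX : ∀ (m : ℕ), MeasurableSet {ω | X 0 ω = m} := by
    intro m
    exact (hmeas 0) (measurableSet_singleton m)
  -- HasSum f 1
  have hf'tot : ∑' m, f' m = 1 := by
    have h1 : (⋃ m, {ω | X 0 ω = m}) = Set.univ := by
      ext ω; simp
    have h2 := measure_iUnion (μ := P) (f := fun m => {ω | X 0 ω = m}) (by
        intro i j hij
        simp only [Function.onFun, Set.disjoint_left]
        intro ω h1 h2
        simp only [Set.mem_setOf_eq] at h1 h2
        omega) (fun m => hmeasX m)
    rw [h1] at h2
    rw [← h2, measure_univ]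
  have hfsum : HasSum f 1 := by
    have hs := ENNReal.summable_toReal (f := f') (by rw [hf'tot]; exact ENNReal.one_ne_top)
    have := hs.hasSum
    rwa [← ENNReal.tsum_toReal_eq (fun a => hfin _), hf'tot, ENNReal.toReal_one] at this
  -- tails
  set r' : ℕ → ENNReal := fun t => P {ω | t < X 0 ω} with hr'def
  set r : ℕ → ℝ := fun t => (r' t).toReal with hrdef
  have hr'sum : ∀ t, ∑' j, f' (t + 1 + j) = r' t := by
    intro t
    have h1 : {ω | t < X 0 ω} = ⋃ j, {ω | X 0 ω = t + 1 + j} := by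
      ext ω
      simp only [Set.mem_setOf_eq, Set.mem_iUnion]
      constructor
      · intro h; exact ⟨X 0 ω - t - 1, by omega⟩
      · rintro ⟨j, hj⟩; omega
    have h2 := measure_iUnion (μ := P) (f := fun j => {ω | X 0 ω = t + 1 + j}) (by
        intro i j hij
        simp only [Function.onFun, Set.disjoint_left]
        intro ω ha hb
        simp only [Set.mem_setOf_eq] at ha hb
        omega) (fun j => hmeasX _)
    simp only [hr'def]
    rw [h1, h2]
  have hr : ∀ t, HasSum (fun j => f (t + 1 + j)) (r t) := by
    intro t
    have hne : ∑' j, f' (t + 1 + j) ≠ ⊤ := by rw [hr'sum t]; exact hfin _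
    have hs := (ENNReal.summable_toReal hne).hasSum
    rwa [← ENNReal.tsum_toReal_eq (fun a => hfin _), hr'sum t] at hs
  -- identification of μ with the sum of the tails
  have hmap0 : Measurable fun n : ℕ => (n : ENNReal) := measurable_from_nat
  have hlint : ∫⁻ ω, (X 0 ω : ENNReal) ∂P = ∫⁻ n, (n : ENNReal) ∂(Measure.map (X 0) P) :=
    (lintegral_map hmap0 (hmeas 0)).symm
  have hmapset : ∀ t : ℕ, (Measure.map (X 0) P) {n : ℕ | t < n} = r' t := by
    intro t
    rw [Measure.map_apply (hmeas 0) (Set.to_countable _).measurableSet]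
    rfl
  have hkey : ∑' t, r' t = ∫⁻ n, (n : ENNReal) ∂(Measure.map (X 0) P) := by
    have h1 : ∀ t, r' t
        = ∫⁻ n, Set.indicator {n : ℕ | t < n} (1 : ℕ → ENNReal) n ∂(Measure.map (X 0) P) := by
      intro t
      rw [lintegral_indicator_one (Set.to_countable _).measurableSet, hmapset t]
    calc ∑' t, r' t
        = ∑' t, ∫⁻ n, Set.indicator {n : ℕ | t < n} (1 : ℕ → ENNReal) n ∂(Measure.map (X 0) P) :=
          tsum_congr h1
      _ = ∫⁻ n, ∑' t, Set.indicator {n' : ℕ | t < n'} (1 : ℕ → ENNReal) n ∂(Measure.map (X 0) P) :=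
          (lintegral_tsum (fun t => measurable_from_nat.aemeasurable)).symm
      _ = ∫⁻ n, (n : ENNReal) ∂(Measure.map (X 0) P) := by
          refine lintegral_congr fun n => ?_
          have hsupp : ∀ t ∉ Finset.range n,
              Set.indicator {n' : ℕ | t < n'} (1 : ℕ → ENNReal) n = 0 := by
            intro t ht
            rw [Finset.mem_range, not_lt] at ht
            apply Set.indicator_of_notMem
            simp only [Set.mem_setOf_eq]; omega
          rw [tsum_eq_sum hsupp]
          have hone : ∀ t ∈ Finset.range n,
              Set.indicator {n' : ℕ | t < n'} (1 : ℕ → ENNReal) n = 1 := by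
            intro t ht
            rw [Finset.mem_range] at ht
            have hmem : n ∈ {n' : ℕ | t < n'} := by simpa using ht
            rw [Set.indicator_of_mem hmem]
            rfl
          rw [Finset.sum_congr rfl hone]
          simp
  have hlfin : ∫⁻ ω, (X 0 ω : ENNReal) ∂P ≠ ⊤ := by
    have h2 : ∫⁻ ω, ((‖(X 0 ω : ℝ)‖₊ : ENNReal)) ∂P < ⊤ := hint.2
    have h3 : ∀ ω, ((‖(X 0 ω : ℝ)‖₊ : ENNReal)) = (X 0 ω : ENNReal) := by
      intro ω
      rw [show ‖(X 0 ω : ℝ)‖₊ = (X 0 ω : NNReal) by simp]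
      simp
    rw [lintegral_congr h3] at h2
    exact h2.ne
  have hμint : μ = (∫⁻ ω, (X 0 ω : ENNReal) ∂P).toReal := by
    rw [hμ, integral_eq_lintegral_of_nonneg_ae (Eventually.of_forall fun ω => by positivity)
      hint.aestronglyMeasurable]
    congr 1
    refine lintegral_congr fun ω => ?_
    rw [ENNReal.ofReal_natCast]
  have hrsum : HasSum r μ := by
    have hne : ∑' t, r' t ≠ ⊤ := by rw [hkey, ← hlint]; exact hlfin
    have hs := (ENNReal.summable_toReal hne).hasSum
    rw [← ENNReal.tsum_toReal_eq (fun a => hfin _)] at hs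
    have hval : (∑' t, r' t).toReal = μ := by rw [hkey, ← hlint, ← hμint]
    rwa [hval] at hs
  -- facts about u
  have hunn : ∀ n, 0 ≤ u n := by
    intro n
    exact Finset.sum_nonneg fun k _ => ENNReal.toReal_nonneg
  have hu0 : u 0 = 1 := by
    have h0 : v 0 0 = 1 := by
      simp only [hvdef]
      rw [show {ω | ∑ i ∈ Finset.range 0, X i ω = 0} = (Set.univ : Set Ω) by ext ω; simp]
      exact measure_univ
    simp [hudef, h0]
  have hdisj2 : ∀ n k k', k < k' →
      P ({ω | ∑ i ∈ Finset.range k, X i ω = n} ∩ {ω | ∑ i ∈ Finset.range k', X i ω = n}) = 0 := by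
    intro n k k' hkk
    refine measure_mono_null ?_ hnull
    rintro ω ⟨h1, h2⟩
    simp only [Set.mem_setOf_eq] at h1 h2 ⊢
    intro hall
    have hsplit : ∑ i ∈ Finset.range k', X i ω
        = ∑ i ∈ Finset.range k, X i ω + ∑ i ∈ Finset.Ico k k', X i ω := by
      rw [Finset.range_eq_Ico]
      rw [← Finset.sum_Ico_consecutive _ (Nat.zero_le k) (le_of_lt hkk), Finset.range_eq_Ico]
    have hge : k' - k ≤ ∑ i ∈ Finset.Ico k k', X i ω := by
      calc k' - k = ∑ _i ∈ Finset.Ico k k', 1 := by simp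
        _ ≤ _ := Finset.sum_le_sum fun i _ => hall i
    omega
  have hub : ∀ n, u n ≤ 1 := by
    intro n
    have hd : Set.Pairwise ↑(Finset.range (n+1))
        (Function.onFun (MeasureTheory.AEDisjoint P)
          (fun k => {ω | ∑ i ∈ Finset.range k, X i ω = n})) := by
      intro k _ k' _ hkk
      rcases Nat.lt_or_ge k k' with h | h
      · exact hdisj2 n k k' h
      · have h' : k' < k := by omega
        have := hdisj2 n k' k h'
        rwa [Set.inter_comm] at this
    have hm : ∀ k ∈ Finset.range (n+1),
        NullMeasurableSet {ω | ∑ i ∈ Finset.range k, X i ω = n} P :=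
      fun k _ => ((hSmeas k) (measurableSet_singleton n)).nullMeasurableSet
    have hsum := measure_biUnion_finset₀ (μ := P) hd hm
    have h2 : u n = (∑ k ∈ Finset.range (n+1), v k n).toReal :=
      (ENNReal.toReal_sum (fun k _ => hfin _)).symm
    rw [h2]
    have h3 : ∑ k ∈ Finset.range (n+1), v k n
        = P (⋃ k ∈ Finset.range (n+1), {ω | ∑ i ∈ Finset.range k, X i ω = n}) := hsum.symm
    rw [h3]
    calc (P _).toReal ≤ (1 : ENNReal).toReal :=
        ENNReal.toReal_mono ENNReal.one_ne_top prob_le_one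
      _ = 1 := ENNReal.toReal_one
  -- the renewal recursion
  have hvrec : ∀ k n, v (k+1) n = ∑ m ∈ Finset.range (n+1), v k (n - m) * f' m := by
    intro k n
    have hfuneq : (∑ j ∈ Finset.range k, X j) = (fun ω => ∑ j ∈ Finset.range k, X j ω) := by
      funext ω
      simp
    have hset : {ω | ∑ i ∈ Finset.range (k+1), X i ω = n}
        = ⋃ m ∈ Finset.range (n+1),
            ((fun ω => ∑ i ∈ Finset.range k, X i ω) ⁻¹' {n - m} ∩ (X k) ⁻¹' {m}) := by
      ext ω
      simp only [Set.mem_setOf_eq, Set.mem_iUnion, Set.mem_inter_iff, Set.mem_preimage,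
        Set.mem_singleton_iff, Finset.mem_range, exists_prop]
      rw [Finset.sum_range_succ]
      constructor
      · intro h
        exact ⟨X k ω, by omega, by omega, rfl⟩
      · rintro ⟨m, hm, hw1, hw2⟩
        omega
    have hd : Set.Pairwise ↑(Finset.range (n+1)) (Function.onFun Disjoint
        (fun m => (fun ω => ∑ i ∈ Finset.range k, X i ω) ⁻¹' {n - m} ∩ (X k) ⁻¹' {m})) := by
      intro a _ b _ hab
      simp only [Function.onFun, Set.disjoint_left]
      rintro ω ⟨_, h2⟩ ⟨_, h4⟩
      simp only [Set.mem_preimage, Set.mem_singleton_iff] at h2 h4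
      exact hab (by omega)
    have hmsets : ∀ m ∈ Finset.range (n+1), MeasurableSet
        ((fun ω => ∑ i ∈ Finset.range k, X i ω) ⁻¹' {n - m} ∩ (X k) ⁻¹' {m}) :=
      fun m _ => ((hSmeas k) (measurableSet_singleton _)).inter
        ((hmeas k) (measurableSet_singleton _))
    have hind : ProbabilityTheory.IndepFun (fun ω => ∑ j ∈ Finset.range k, X j ω) (X k) P := by
      have := hindep.indepFun_sum_range_succ hmeas k
      rwa [hfuneq] at this
    have hstep : ∀ m ∈ Finset.range (n+1),
        P ((fun ω => ∑ i ∈ Finset.range k, X i ω) ⁻¹' {n - m} ∩ (X k) ⁻¹' {m})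
          = v k (n - m) * f' m := by
      intro m _
      rw [hind.measure_inter_preimage_eq_mul {n - m} {m}
        (measurableSet_singleton _) (measurableSet_singleton _)]
      rw [hf'map k m]
      rfl
    calc v (k+1) n
        = P (⋃ m ∈ Finset.range (n+1),
            ((fun ω => ∑ i ∈ Finset.range k, X i ω) ⁻¹' {n - m} ∩ (X k) ⁻¹' {m})) := by
          simp only [hvdef]
          rw [hset]
      _ = ∑ m ∈ Finset.range (n+1),
            P ((fun ω => ∑ i ∈ Finset.range k, X i ω) ⁻¹' {n - m} ∩ (X k) ⁻¹' {m}) :=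
          measure_biUnion_finset hd hmsets
      _ = ∑ m ∈ Finset.range (n+1), v k (n - m) * f' m := Finset.sum_congr rfl hstep
  have hurec : ∀ n, u (n+1) = ∑ m ∈ Finset.range (n+2), f m * u (n+1-m) := by
    intro n
    have hv0n : v 0 (n+1) = 0 := by
      simp only [hvdef]
      rw [show {ω | ∑ i ∈ Finset.range 0, X i ω = n+1} = (∅ : Set Ω) by ext ω; simp]
      exact measure_empty
    have hsplit : u (n+1)
        = ∑ k ∈ Finset.range (n+1), (v (k+1) (n+1)).toReal + (v 0 (n+1)).toReal :=
      Finset.sum_range_succ' (fun k => (v k (n+1)).toReal) (n+1)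
    rw [hsplit, hv0n]
    simp only [ENNReal.toReal_zero, add_zero]
    have hstep : ∀ k, (v (k+1) (n+1)).toReal
        = ∑ m ∈ Finset.range (n+2), (v k (n+1-m)).toReal * f m := by
      intro k
      rw [hvrec k (n+1), ENNReal.toReal_sum (fun m _ =>
        ENNReal.mul_ne_top (hfin _) (hfin _))]
      exact Finset.sum_congr rfl fun m _ => ENNReal.toReal_mul
    rw [Finset.sum_congr rfl (fun k _ => hstep k), Finset.sum_comm]
    refine Finset.sum_congr rfl fun m hm => ?_
    rw [Finset.mem_range] at hm
    rcases Nat.eq_zero_or_pos m with rfl | hm1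
    · simp [hf0]
    · rw [← Finset.sum_mul]
      have hsum_eq : ∑ k ∈ Finset.range (n+1), (v k (n+1-m)).toReal = u (n+1-m) := by
      -- u j = Σ_{k∈range (j+1)}
        symm
        refine Finset.sum_subset ?_ ?_
        · apply Finset.range_subset_range.mpr; omega
        · intro k hk hk2
          rw [Finset.mem_range, not_lt] at hk2
          rw [hv_zero k (n+1-m) (by omega)]
          simp
      rw [hsum_eq]; ring
  have hgcd : ∀ m : ℕ, (∀ k, f k ≠ 0 → m ∣ k) → m = 1 := by
    intro m h
    refine haper m (fun k hk => h k ?_)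
    simp only [hfdef]
    rw [ENNReal.toReal_ne_zero]
    exact ⟨hk, hfin _⟩
  exact efp_renewal f u r hfnn hf0 hfsum hr μ hrsum hu0 hunn hub hurec hgcd
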